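/- For every probability measure D on Z and every n ≥ 1, E_{T~D^n} [ L_D(A_n(T)) − L_T(A_n(T)) ] = E_{T~D^n} E_{x'~D} [ (1/n) Σ_{i=1}^n ( ℓ(A_n(T^{i←x'}), T_i) − ℓ(A_n(T), T_i) ) ]. -/

import Mathlib

open MeasureTheory

noncomputable section

/-- The i.i.d. sample measure of size `n` drawn from `D`. -/
def iid {Z : Type*} [MeasurableSpace Z] (D : Measure Z) (n : ℕ) :
    Measure (Fin n → Z) :=
  Measure.pi fun _ => D

/-- The learning algorithm is symmetric: invariant under permutations of the
entries of its input tuple. -/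
def IsSymmetricAlg {Z H : Type*} (A : ∀ k : ℕ, (Fin k → Z) → H) : Prop :=
  ∀ (k : ℕ) (σ : Equiv.Perm (Fin k)) (S : Fin k → Z), A k (S ∘ σ) = A k S

/-- For each `k`, the map `(S, z) ↦ ℓ(A k S, z)` is measurable and bounded. -/
def MeasBddAlg {Z H : Type*} [MeasurableSpace Z] (ℓ : H → Z → ℝ)
    (A : ∀ k : ℕ, (Fin k → Z) → H) : Prop :=
  ∀ k : ℕ, Measurable (fun p : (Fin k → Z) × Z => ℓ (A k p.1) p.2) ∧
    ∃ C : ℝ, ∀ (S : Fin k → Z) (z : Z), ℓ (A k S) z ≤ C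

/-- On-Average-Replace-One-Stability with rate `ε1`. -/
def OAROS {Z H : Type*} [MeasurableSpace Z] (ℓ : H → Z → ℝ)
    (A : ∀ k : ℕ, (Fin k → Z) → H) (ε1 : ℕ → ℝ) : Prop :=
  Antitone ε1 ∧
  ∀ (D : Measure Z), IsProbabilityMeasure D → ∀ n : ℕ, 1 ≤ n →
    ∫ T, ∫ x',
        (n : ℝ)⁻¹ * ∑ i : Fin n,
          |ℓ (A n T) (T i) - ℓ (A n (Function.update T i x')) (T i)|
      ∂D ∂(iid D n) ≤ ε1 n


section Aux
variable {Z : Type*} [MeasurableSpace Z]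

lemma iid_map_perm (D : Measure Z) [IsProbabilityMeasure D] {m : ℕ} (σ : Equiv.Perm (Fin m)) :
    MeasurePreserving (fun g : Fin m → Z => g ∘ σ)
      (Measure.pi fun _ => D) (Measure.pi fun _ => D) := by
  have hm : Measurable (fun g : Fin m → Z => g ∘ σ) :=
    measurable_pi_lambda _ fun i => measurable_pi_apply _
  refine ⟨hm, ((Measure.pi_eq fun s hs => ?_)).symm⟩
  rw [Measure.map_apply hm (MeasurableSet.univ_pi hs)]
  have hpre : (fun g : Fin m → Z => g ∘ σ) ⁻¹' Set.pi Set.univ s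
      = Set.pi Set.univ (fun j => s (σ.symm j)) := by
    ext g
    simp only [Set.mem_preimage, Set.mem_pi, Set.mem_univ, true_implies, Function.comp_apply]
    constructor
    · intro h j; simpa using h (σ.symm j)
    · intro h i; simpa using h (σ i)
  rw [hpre, Measure.pi_pi]
  exact Equiv.prod_comp σ.symm fun i => D (s i)

/-- The replace-one involution as a measurable equivalence. -/
def phiE {n : ℕ} (i : Fin n) : ((Fin n → Z) × Z) ≃ᵐ ((Fin n → Z) × Z) where
  toFun p := (Function.update p.1 i p.2, p.1 i)
  invFun p := (Function.update p.1 i p.2, p.1 i)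
  left_inv p := by
    simp [Function.update_idem, Function.update_eq_self]
  right_inv p := by
    simp [Function.update_idem, Function.update_eq_self]
  measurable_toFun :=
    measurable_update'.prodMk ((measurable_pi_apply i).comp measurable_fst)
  measurable_invFun :=
    measurable_update'.prodMk ((measurable_pi_apply i).comp measurable_fst)

lemma phi_pres (D : Measure Z) [IsProbabilityMeasure D] {n : ℕ} (i : Fin n) :
    MeasurePreserving (phiE (Z := Z) i)
      ((Measure.pi fun _ : Fin n => D).prod D) ((Measure.pi fun _ : Fin n => D).prod D) := by
  set ν : Measure (Fin (n + 1) → Z) := Measure.pi fun _ => D with hν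
  set Φ : (Fin (n + 1) → Z) → (Fin n → Z) × Z :=
    fun g => (fun j : Fin n => g ((Fin.last n).succAbove j), g (Fin.last n)) with hΦdef
  have h1 := measurePreserving_piFinSuccAbove (fun _ : Fin (n + 1) => D) (Fin.last n)
  have hΦ : MeasurePreserving Φ ν ((Measure.pi fun _ : Fin n => D).prod D) := by
    have h2 := Measure.measurePreserving_swap.comp h1
    convert h2 using 1
    funext g
    rfl
  set σ : Equiv.Perm (Fin (n + 1)) := Equiv.swap (Fin.castSucc i) (Fin.last n) with hσ
  have key : (⇑(phiE (Z := Z) i)) ∘ Φ = Φ ∘ (fun g => g ∘ σ) := by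
    funext g
    show (Function.update (fun j : Fin n => g ((Fin.last n).succAbove j)) i (g (Fin.last n)),
        g ((Fin.last n).succAbove i)) = _
    simp only [Function.comp_apply, hΦdef]
    refine Prod.ext ?_ ?_
    · funext j
      dsimp only
      by_cases hj : j = i
      · subst hj
        simp [hσ, Fin.succAbove_last, Equiv.swap_apply_left]
      · rw [Function.update_of_ne hj]
        have hfix : σ ((Fin.last n).succAbove j) = (Fin.last n).succAbove j := by
          rw [hσ, Fin.succAbove_last]
          exact Equiv.swap_apply_of_ne_of_ne (by simpa [Fin.castSucc_inj] using hj)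
            (Fin.castSucc_lt_last j).ne
        rw [hfix]
    · dsimp only
      simp [hσ, Fin.succAbove_last, Equiv.swap_apply_right]
  refine ⟨(phiE (Z := Z) i).measurable, ?_⟩
  have hmσ : Measurable (fun g : Fin (n + 1) → Z => g ∘ σ) :=
    measurable_pi_lambda _ fun j => measurable_pi_apply _
  conv_lhs => rw [← hΦ.map_eq]
  rw [Measure.map_map (phiE (Z := Z) i).measurable hΦ.measurable,
    key, ← Measure.map_map hΦ.measurable hmσ, (iid_map_perm D σ).map_eq, hΦ.map_eq]

end Aux

lemma integrable_of_bound {α : Type*} [MeasurableSpace α] {m' : Measure α}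
    [IsFiniteMeasure m'] {g : α → ℝ} (hg : Measurable g) (C : ℝ)
    (hCg : ∀ x, ‖g x‖ ≤ C) : Integrable g m' :=
  (integrable_const C).mono' hg.aestronglyMeasurable (Filter.Eventually.of_forall hCg)

theorem stmt_5' {Z H : Type*} [MeasurableSpace Z] (ℓ : H → Z → ℝ)
    (A : ∀ k : ℕ, (Fin k → Z) → H)
    (hℓ : ∀ (h : H) (z : Z), 0 ≤ ℓ h z)
    (hsym : IsSymmetricAlg A) (hmb : MeasBddAlg ℓ A)
    (D : Measure Z) [IsProbabilityMeasure D] (n : ℕ) (hn : 1 ≤ n) :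
    ∫ T,
        ((∫ z, ℓ (A n T) z ∂D) - (n : ℝ)⁻¹ * ∑ i : Fin n, ℓ (A n T) (T i))
      ∂(Measure.pi fun _ : Fin n => D) =
      ∫ T, ∫ x',
          (n : ℝ)⁻¹ * ∑ i : Fin n,
            (ℓ (A n (Function.update T i x')) (T i) - ℓ (A n T) (T i))
        ∂D ∂(Measure.pi fun _ : Fin n => D) := by
  clear hsym
  set π : Measure (Fin n → Z) := Measure.pi fun _ : Fin n => D with hπ
  haveI : IsProbabilityMeasure π := by rw [hπ]; infer_instance
  obtain ⟨hfm, C, hC⟩ := hmb n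
  have hnorm : ∀ (S : Fin n → Z) (z : Z), ‖ℓ (A n S) z‖ ≤ C := fun S z => by
    rw [Real.norm_eq_abs, abs_of_nonneg (hℓ _ _)]; exact hC _ _
  have hf : Integrable (fun p : (Fin n → Z) × Z => ℓ (A n p.1) p.2) (π.prod D) :=
    integrable_of_bound hfm C fun p => hnorm _ _
  have hup : ∀ i : Fin n, Integrable
      (fun p : (Fin n → Z) × Z => ℓ (A n (Function.update p.1 i p.2)) (p.1 i)) (π.prod D) :=
    fun i => integrable_of_bound
      (hfm.comp (measurable_update'.prodMk ((measurable_pi_apply i).comp measurable_fst)))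
      C fun p => hnorm _ _
  have hdiag : ∀ i : Fin n, Integrable
      (fun p : (Fin n → Z) × Z => ℓ (A n p.1) (p.1 i)) (π.prod D) :=
    fun i => integrable_of_bound
      (hfm.comp (measurable_fst.prodMk ((measurable_pi_apply i).comp measurable_fst)))
      C fun p => hnorm _ _
  have hdiag' : ∀ i : Fin n, Integrable (fun T : Fin n → Z => ℓ (A n T) (T i)) π :=
    fun i => integrable_of_bound
      (hfm.comp (measurable_id.prodMk (measurable_pi_apply i)))
      C fun T => hnorm _ _
  have key1 : ∀ i : Fin n,
      ∫ p : (Fin n → Z) × Z, ℓ (A n (Function.update p.1 i p.2)) (p.1 i) ∂(π.prod D)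
        = ∫ p : (Fin n → Z) × Z, ℓ (A n p.1) p.2 ∂(π.prod D) := by
    intro i
    have h := (phi_pres D i).integral_comp' (fun p : (Fin n → Z) × Z => ℓ (A n p.1) p.2)
    rw [hπ]
    exact h
  have key2 : ∀ i : Fin n,
      ∫ p : (Fin n → Z) × Z, ℓ (A n p.1) (p.1 i) ∂(π.prod D)
        = ∫ T, ℓ (A n T) (T i) ∂π := by
    intro i
    rw [integral_prod _ (hdiag i)]
    simp
  have hL : (∫ T, ((∫ z, ℓ (A n T) z ∂D) - (n : ℝ)⁻¹ * ∑ i : Fin n, ℓ (A n T) (T i)) ∂π)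
      = (∫ p : (Fin n → Z) × Z, ℓ (A n p.1) p.2 ∂(π.prod D))
        - (n : ℝ)⁻¹ * ∑ i : Fin n, ∫ T, ℓ (A n T) (T i) ∂π := by
    have hI : Integrable (fun T => ∫ z, ℓ (A n T) z ∂D) π := hf.integral_prod_left
    have hS : Integrable (fun T => (n : ℝ)⁻¹ * ∑ i : Fin n, ℓ (A n T) (T i)) π :=
      (integrable_finset_sum _ fun i _ => hdiag' i).const_mul _
    rw [integral_sub hI hS, integral_const_mul, integral_finset_sum _ fun i _ => hdiag' i]
    congr 1
    exact (integral_prod _ hf).symm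
  have hsub : ∀ i : Fin n, Integrable (fun p : (Fin n → Z) × Z =>
      ℓ (A n (Function.update p.1 i p.2)) (p.1 i) - ℓ (A n p.1) (p.1 i)) (π.prod D) :=
    fun i => (hup i).sub (hdiag i)
  have hG : Integrable (fun p : (Fin n → Z) × Z => (n : ℝ)⁻¹ * ∑ i : Fin n,
      (ℓ (A n (Function.update p.1 i p.2)) (p.1 i) - ℓ (A n p.1) (p.1 i))) (π.prod D) :=
    (integrable_finset_sum _ fun i _ => hsub i).const_mul _
  have hR : (∫ T, ∫ x', (n : ℝ)⁻¹ * ∑ i : Fin n,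
        (ℓ (A n (Function.update T i x')) (T i) - ℓ (A n T) (T i)) ∂D ∂π)
      = (n : ℝ)⁻¹ * ∑ i : Fin n,
          ((∫ p : (Fin n → Z) × Z, ℓ (A n p.1) p.2 ∂(π.prod D))
            - ∫ T, ℓ (A n T) (T i) ∂π) := by
    have h1 : (∫ T, ∫ x', (n : ℝ)⁻¹ * ∑ i : Fin n,
          (ℓ (A n (Function.update T i x')) (T i) - ℓ (A n T) (T i)) ∂D ∂π)
        = ∫ p : (Fin n → Z) × Z, (n : ℝ)⁻¹ * ∑ i : Fin n,
            (ℓ (A n (Function.update p.1 i p.2)) (p.1 i) - ℓ (A n p.1) (p.1 i)) ∂(π.prod D) :=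
      (integral_prod _ hG).symm
    rw [h1, integral_const_mul, integral_finset_sum _ fun i _ => hsub i]
    congr 1
    refine Finset.sum_congr rfl fun i _ => ?_
    rw [integral_sub (hup i) (hdiag i), key1 i, key2 i]
  rw [hL, hR]
  rw [Finset.sum_sub_distrib, Finset.sum_const, Finset.card_univ, Fintype.card_fin,
    nsmul_eq_mul, mul_sub, ← mul_assoc,
    inv_mul_cancel₀ (Nat.cast_ne_zero.mpr (by omega) : (n : ℝ) ≠ 0), one_mul]

/-- the expected generalization gap equals the expected
replace-one loss difference. -/
theorem stmt_5 {Z H : Type*} [MeasurableSpace Z] (ℓ : H → Z → ℝ)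
    (A : ∀ k : ℕ, (Fin k → Z) → H)
    (hℓ : ∀ (h : H) (z : Z), 0 ≤ ℓ h z)
    (hsym : IsSymmetricAlg A) (hmb : MeasBddAlg ℓ A)
    (D : Measure Z) [IsProbabilityMeasure D] (n : ℕ) (hn : 1 ≤ n) :
    ∫ T,
        ((∫ z, ℓ (A n T) z ∂D) - (n : ℝ)⁻¹ * ∑ i : Fin n, ℓ (A n T) (T i))
      ∂(iid D n) =
      ∫ T, ∫ x',
          (n : ℝ)⁻¹ * ∑ i : Fin n,
            (ℓ (A n (Function.update T i x')) (T i) - ℓ (A n T) (T i))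
        ∂D ∂(iid D n) := by
  exact stmt_5' ℓ A hℓ hsym hmb D n hn
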